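/- If c ≥ b = √(q/θ_ig), then the derivative θ_c'(x) = (c·θ_ig − q/c)e^{cx} + q/c is strictly positive for all x > 0, θ_c(x) → +∞ as x → +∞, and consequently there exists a unique R > 0 such that θ_c(R) = θ_hl; moreover θ_c'(R) > 0. -/

import Mathlib

open Set Filter

/-- The solution `θ_c` of the shooting problem `θ'' − cθ' + q = 0`, `θ(0) = θ_ig`,
`θ'(0) = c θ_ig`. -/
noncomputable def theta (q θig c x : ℝ) : ℝ :=
  θig * Real.exp (c * x) + (q / c) * x + (q / c ^ 2) * (1 - Real.exp (c * x))

lemma theta_hasDerivAt (q θig c : ℝ) (hc : c ≠ 0) (x : ℝ) :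
    HasDerivAt (theta q θig c) ((c * θig - q / c) * Real.exp (c * x) + q / c) x := by
  have h1 : HasDerivAt (fun x => Real.exp (c * x)) (c * Real.exp (c * x)) x := by
    simpa [mul_comm, Function.comp_def] using (Real.hasDerivAt_exp (c * x)).comp x ((hasDerivAt_id x).const_mul c)
  have h := ((h1.const_mul θig).add ((hasDerivAt_id x).const_mul (q / c))).add
    ((h1.const_sub 1).const_mul (q / c ^ 2))
  convert h using 1
  · rfl
  · rfl
  · rfl
  field_simp
  ring

/-- For `c ≥ b = √(q/θ_ig)`, the derivative `θ_c'(x) = (cθ_ig − q/c)e^{cx} + q/c` is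
positive for `x > 0`, `θ_c(x) → +∞`, and there is a unique `R > 0` with
`θ_c(R) = θ_hl`; moreover `θ_c'(R) > 0`. -/
theorem stmt2 (q θig θhl : ℝ) (hq : 0 < q) (h1 : 0 < θig) (h2 : θig < θhl)
    (c : ℝ) (hc : Real.sqrt (q / θig) ≤ c) :
    (∀ x : ℝ, deriv (theta q θig c) x = (c * θig - q / c) * Real.exp (c * x) + q / c) ∧
    (∀ x > (0 : ℝ), 0 < (c * θig - q / c) * Real.exp (c * x) + q / c) ∧
    Tendsto (theta q θig c) atTop atTop ∧
    (∃! R : ℝ, 0 < R ∧ theta q θig c R = θhl) ∧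
    (∀ R : ℝ, 0 < R → theta q θig c R = θhl → 0 < deriv (theta q θig c) R) := by
  have hqθ : 0 < q / θig := div_pos hq h1
  have hc0 : 0 < c := lt_of_lt_of_le (Real.sqrt_pos.2 hqθ) hc
  have hc2 : q / θig ≤ c ^ 2 := by
    have := pow_le_pow_left₀ (Real.sqrt_nonneg _) hc 2
    rwa [Real.sq_sqrt hqθ.le] at this
  have hqc : q ≤ c ^ 2 * θig := (div_le_iff₀ h1).mp hc2
  have hA : 0 ≤ c * θig - q / c := by
    rw [sub_nonneg, div_le_iff₀ hc0]; nlinarith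
  have hderiv : ∀ x : ℝ, deriv (theta q θig c) x
      = (c * θig - q / c) * Real.exp (c * x) + q / c :=
    fun x => (theta_hasDerivAt q θig c hc0.ne' x).deriv
  have hpos : ∀ x : ℝ, 0 < (c * θig - q / c) * Real.exp (c * x) + q / c := by
    intro x
    have := mul_nonneg hA (Real.exp_pos (c * x)).le
    have : 0 < q / c := div_pos hq hc0
    positivity
  have hmono : StrictMono (theta q θig c) := by
    apply strictMono_of_deriv_pos
    intro x
    rw [hderiv x]
    exact hpos x
  have hcont : Continuous (theta q θig c) := by
    unfold theta; continuity
  have key : ∀ x : ℝ, q / c * x ≤ theta q θig c x := by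
    intro x
    have hA' : 0 ≤ θig - q / c ^ 2 := by
      rw [sub_nonneg, div_le_iff₀ (by positivity)]; nlinarith
    have he : 0 ≤ Real.exp (c * x) := (Real.exp_pos _).le
    have hq2 : 0 ≤ q / c ^ 2 := by positivity
    unfold theta
    nlinarith [mul_nonneg hA' he]
  have htend : Tendsto (theta q θig c) atTop atTop := by
    apply tendsto_atTop_mono key
    exact tendsto_id.const_mul_atTop (by positivity)
  have htheta0 : theta q θig c 0 = θig := by simp [theta]
  refine ⟨hderiv, fun x _ => hpos x, htend, ?_, ?_⟩
  · obtain ⟨x₀, hx₀⟩ := (htend.eventually_ge_atTop θhl).exists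
    have h0x₀ : (0 : ℝ) ≤ x₀ := by
      by_contra h
      push_neg at h
      have := hmono h
      rw [htheta0] at this
      linarith
    have : θhl ∈ Icc (theta q θig c 0) (theta q θig c x₀) := by
      rw [htheta0]; exact ⟨h2.le, hx₀⟩
    obtain ⟨R, hR, hRθ⟩ := intermediate_value_Icc h0x₀ hcont.continuousOn this
    have hR0 : 0 < R := by
      rcases lt_or_eq_of_le hR.1 with h | h
      · exact h
      · exfalso
        rw [← h, htheta0] at hRθ
        linarith
    refine ⟨R, ⟨hR0, hRθ⟩, ?_⟩
    rintro y ⟨_, hy⟩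
    exact hmono.injective (hy.trans hRθ.symm)
  · intro R _ _
    rw [hderiv R]
    exact hpos R
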